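/- arXiv:1911.04262 — 3 statements merged into one kernel-verified Lean document; each statement's English description precedes it below -/
import Mathlib

section
/- In a compact Hausdorff topological ring R, the closure of the upper nilradical N(R) (the sum of all two-sided nil ideals) is contained in the Jacobson radical J(R). -/
/-- An additive subgroup is a two-sided nil ideal if it is closed under left and right
multiplication by ring elements and every element is nilpotent. -/
def IsTwoSidedNilIdeal {R : Type*} [Ring R] (I : AddSubgroup R) : Prop :=
  (∀ r x : R, x ∈ I → r * x ∈ I ∧ x * r ∈ I) ∧ ∀ x ∈ I, IsNilpotent x

/-- The upper nilradical: the sum of all two-sided nil ideals. -/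
def upperNilradical (R : Type*) [Ring R] : AddSubgroup R :=
  ⨆ I ∈ {I : AddSubgroup R | IsTwoSidedNilIdeal I}, I

section Alg
variable {R : Type*} [Ring R]

lemma tsni_bot : IsTwoSidedNilIdeal (⊥ : AddSubgroup R) := by
  constructor
  · rintro r x hx
    simp only [AddSubgroup.mem_bot] at hx
    simp [hx]
  · rintro x hx
    simp only [AddSubgroup.mem_bot] at hx
    simp [hx]

lemma tsni_sup {I J : AddSubgroup R} (hI : IsTwoSidedNilIdeal I) (hJ : IsTwoSidedNilIdeal J) :
    IsTwoSidedNilIdeal (I ⊔ J) := by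
  constructor
  · rintro r x hx
    rw [AddSubgroup.mem_sup] at hx
    obtain ⟨a, ha, b, hb, rfl⟩ := hx
    constructor
    · rw [AddSubgroup.mem_sup]
      exact ⟨r * a, (hI.1 r a ha).1, r * b, (hJ.1 r b hb).1, (mul_add r a b).symm⟩
    · rw [AddSubgroup.mem_sup]
      exact ⟨a * r, (hI.1 r a ha).2, b * r, (hJ.1 r b hb).2, (add_mul a b r).symm⟩
  · rintro x hx
    rw [AddSubgroup.mem_sup] at hx
    obtain ⟨a, ha, b, hb, rfl⟩ := hx
    obtain ⟨n, hn⟩ := hJ.2 b hb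
    have key : ∀ m : ℕ, (a + b) ^ m - b ^ m ∈ I := by
      intro m
      induction m with
      | zero => simpa using I.zero_mem
      | succ m ih =>
        have h1 : (a + b) ^ (m + 1) - b ^ (m + 1)
            = ((a + b) ^ m - b ^ m) * (a + b) + b ^ m * a := by
          rw [pow_succ, pow_succ]; noncomm_ring
        rw [h1]
        exact I.add_mem (hI.1 (a + b) _ ih).2 (hI.1 (b ^ m) a ha).1
    have h2 : (a + b) ^ n ∈ I := by
      have := key n
      rwa [hn, sub_zero] at this
    obtain ⟨m, hm⟩ := hI.2 _ h2
    exact ⟨n * m, by rw [pow_mul, hm]⟩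

lemma mem_unr_exists {x : R} (hx : x ∈ upperNilradical R) :
    ∃ K : AddSubgroup R, IsTwoSidedNilIdeal K ∧ x ∈ K := by
  rw [upperNilradical, iSup_subtype'] at hx
  refine AddSubgroup.iSup_induction
    (C := fun y => ∃ K : AddSubgroup R, IsTwoSidedNilIdeal K ∧ y ∈ K) _ hx
    (fun i x hx => ⟨i.1, i.2, hx⟩) ⟨⊥, tsni_bot, by simp⟩ ?_
  rintro x y ⟨K, hK, hxK⟩ ⟨L, hL, hyL⟩
  exact ⟨K ⊔ L, tsni_sup hK hL,
    (K ⊔ L).add_mem (AddSubgroup.mem_sup_left hxK) (AddSubgroup.mem_sup_right hyL)⟩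

lemma tsni_le {K : AddSubgroup R} (hK : IsTwoSidedNilIdeal K) : K ≤ upperNilradical R :=
  le_iSup₂ (f := fun (I : AddSubgroup R) (_ : I ∈ {I | IsTwoSidedNilIdeal I}) => I) K hK

lemma unr_mul_left (r : R) {x : R} (hx : x ∈ upperNilradical R) :
    r * x ∈ upperNilradical R := by
  obtain ⟨K, hK, hxK⟩ := mem_unr_exists hx
  exact tsni_le hK (hK.1 r x hxK).1

lemma unr_mul_right (r : R) {x : R} (hx : x ∈ upperNilradical R) :
    x * r ∈ upperNilradical R := by
  obtain ⟨K, hK, hxK⟩ := mem_unr_exists hx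
  exact tsni_le hK (hK.1 r x hxK).2

lemma unr_nilpotent {x : R} (hx : x ∈ upperNilradical R) : IsNilpotent x := by
  obtain ⟨K, hK, hxK⟩ := mem_unr_exists hx
  exact hK.2 x hxK

end Alg

section Top
variable {R : Type*} [Ring R] [TopologicalSpace R] [IsTopologicalRing R]

open Filter Topology

lemma Nc_mul {x y : R} (hx : x ∈ closure (upperNilradical R : Set R))
    (hy : y ∈ closure (upperNilradical R : Set R)) :
    x * y ∈ closure (upperNilradical R : Set R) :=
  map_mem_closure₂ continuous_mul hx hy (fun a _ b hb => unr_mul_left a hb)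

variable [CompactSpace R] [T2Space R]

lemma Nc_pow {y : R} (hy : y ∈ closure (upperNilradical R : Set R)) :
    ∀ n : ℕ, y ^ (n + 1) ∈ closure (upperNilradical R : Set R) := by
  intro n
  induction n with
  | zero => simpa using hy
  | succ n ih => rw [pow_succ]; exact Nc_mul ih hy

/-- Any idempotent in the closure of the upper nilradical is zero. -/
lemma idem_zero {e : R} (he : e ∈ closure (upperNilradical R : Set R)) (hee : e * e = e) :
    e = 0 := by
  classical
  set N : Set R := (upperNilradical R : Set R)
  set f : Filter R := 𝓝 e ⊓ 𝓟 N with hf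
  haveI hfne : f.NeBot := mem_closure_iff_clusterPt.mp he
  set u : R → R := fun a => e - e * a * e with hu
  set v : R → R := fun a =>
    (if h : IsNilpotent (e * a * e) then e * ∑ i ∈ Finset.range h.choose, (e * a * e) ^ i
      else 0) with hv
  -- on N, u a * v a = e
  have huv : ∀ a ∈ N, u a * v a = e := by
    intro a ha
    have hbN : e * a * e ∈ upperNilradical R := by
      have := unr_mul_left e (unr_mul_right e ha); rwa [← mul_assoc] at this
    have hb : IsNilpotent (e * a * e) := unr_nilpotent hbN
    set b : R := e * a * e with hbdef
    have hk : b ^ hb.choose = 0 := hb.choose_spec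
    have heb : e * b = b := by rw [hbdef, ← mul_assoc, ← mul_assoc, hee]
    have hbe : b * e = b := by rw [hbdef, mul_assoc, mul_assoc, hee, ← mul_assoc]
    have h1 : e - b = e * (1 - b) := by rw [mul_sub, mul_one, heb]
    have h2 : (1 - b) * e = e * (1 - b) := by
      rw [sub_mul, one_mul, hbe, mul_sub, mul_one, heb]
    calc u a * v a = (e - b) * (e * ∑ i ∈ Finset.range hb.choose, b ^ i) := by
          rw [hu, hv]; exact congrArg _ (dif_pos hb)
      _ = e * ((1 - b) * e) * (∑ i ∈ Finset.range hb.choose, b ^ i) := by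
          rw [h1]; noncomm_ring
      _ = (e * e) * ((1 - b) * ∑ i ∈ Finset.range hb.choose, b ^ i) := by
          rw [h2]; noncomm_ring
      _ = e * (1 - b ^ hb.choose) := by rw [hee, mul_neg_geom_sum]
      _ = e := by rw [hk, sub_zero, mul_one]
  -- u tends to 0 along f
  have hid : Tendsto (fun a : R => a) f (𝓝 e) := tendsto_id'.mpr inf_le_left
  have hu0 : Tendsto u f (𝓝 0) := by
    have : Tendsto u f (𝓝 (e - e * e * e)) :=
      tendsto_const_nhds.sub ((tendsto_const_nhds.mul hid).mul tendsto_const_nhds)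
    rwa [hee, hee, sub_self] at this
  -- cluster point of the pair
  obtain ⟨⟨p, q⟩, hpq⟩ := exists_clusterPt_of_compactSpace (map (fun a => (u a, v a)) f)
  have hp : p = 0 := by
    have h1 : ClusterPt p (map u f) := by
      have := hpq.map (continuous_fst.continuousAt)
        (tendsto_map.comp tendsto_id : Tendsto Prod.fst _ (map Prod.fst (map (fun a => (u a, v a)) f)))
      simpa [Filter.map_map, Function.comp_def] using this
    have h2 : map u f ≤ 𝓝 0 := hu0
    exact eq_of_nhds_neBot (h1.mono h2)
  have hpqc : ClusterPt (p * q) (map (fun a => u a * v a) f) := by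
    have := hpq.map (continuous_mul.continuousAt)
      (tendsto_map.comp tendsto_id :
        Tendsto (fun z : R × R => z.1 * z.2) _ (map (fun z : R × R => z.1 * z.2) (map (fun a => (u a, v a)) f)))
    simpa [Filter.map_map, Function.comp_def] using this
  have hconst : Tendsto (fun a => u a * v a) f (𝓝 e) := by
    have hev : ∀ᶠ a in f, u a * v a = e := by
      filter_upwards [inf_le_right (a := 𝓝 e) (b := 𝓟 N) (mem_principal_self N)] with a ha
      exact huv a ha
    exact Tendsto.congr' (by filter_upwards [hev] with a ha using ha.symm) tendsto_const_nhds
  have : p * q = e := eq_of_nhds_neBot (hpqc.mono hconst)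
  rw [← this, hp, zero_mul]

/-- 0 lies in the closure of the high powers of any element of the closure of the nilradical. -/
lemma zero_mem_closure_pows {y : R} (hy : y ∈ closure (upperNilradical R : Set R)) (m : ℕ) :
    (0 : R) ∈ closure ((fun n : ℕ => y ^ n) '' Set.Ici (m + 1)) := by
  set S : Set R := (fun n : ℕ => y ^ n) '' Set.Ici (m + 1) with hS
  have hmul : ∀ a ∈ closure S, ∀ b ∈ closure S, a * b ∈ closure S := by
    intro a ha b hb
    refine map_mem_closure₂ continuous_mul ha hb ?_
    rintro c ⟨n, hn, rfl⟩ d ⟨k, hk, rfl⟩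
    have hn' : m + 1 ≤ n := hn
    have hk' : m + 1 ≤ k := hk
    exact ⟨n + k, Set.mem_Ici.mpr (by omega), pow_add y n k⟩
  obtain ⟨e, heS, hee⟩ := exists_idempotent_in_compact_subsemigroup
    (fun r => continuous_mul_right r) (closure S)
    ⟨y ^ (m + 1), subset_closure ⟨m + 1, Set.mem_Ici.mpr le_rfl, rfl⟩⟩
    isClosed_closure.isCompact hmul
  have heN : e ∈ closure (upperNilradical R : Set R) := by
    refine closure_minimal ?_ isClosed_closure heS
    rintro z ⟨n, hn, rfl⟩
    have hn' : m + 1 ≤ n := hn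
    obtain ⟨k, rfl⟩ : ∃ k, n = k + 1 := ⟨n - 1, by omega⟩
    exact Nc_pow hy k
  have he0 : e = 0 := idem_zero heN hee
  rwa [he0] at heS

/-- Every element of the closure of the upper nilradical is left quasi-regular. -/
lemma left_inv_one_sub {y : R} (hy : y ∈ closure (upperNilradical R : Set R)) :
    ∃ s : R, s * (1 - y) = 1 := by
  set G : Filter ℕ := atTop ⊓ comap (fun n => y ^ n) (𝓝 0) with hG
  haveI hGne : G.NeBot := by
    rw [hG, (atTop_basis.inf ((𝓝 (0 : R)).basis_sets.comap _)).neBot_iff]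
    rintro ⟨m, V⟩ ⟨-, hV⟩
    obtain ⟨z, hzV, n, hn, rfl⟩ := _root_.mem_closure_iff_nhds.mp (zero_mem_closure_pows hy m) V hV
    have hn' : m + 1 ≤ n := hn
    exact ⟨n, ⟨Set.mem_Ici.mpr (by omega), hzV⟩⟩
  set sfun : ℕ → R := fun n => ∑ i ∈ Finset.range n, y ^ i with hsfun
  obtain ⟨s0, hs0⟩ := exists_clusterPt_of_compactSpace (map sfun G)
  refine ⟨s0, ?_⟩
  have hcl : ClusterPt (s0 * (1 - y)) (map (fun n => sfun n * (1 - y)) G) := by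
    refine hs0.map (continuous_mul_right (1 - y)).continuousAt ?_
    rw [Filter.tendsto_map'_iff]
    exact tendsto_map
  have hfun : (fun n => sfun n * (1 - y)) = fun n => 1 - y ^ n := by
    funext n; exact geom_sum_mul_neg y n
  have hlim : Tendsto (fun n => sfun n * (1 - y)) G (𝓝 1) := by
    rw [hfun]
    have h1 : Tendsto (fun n : ℕ => y ^ n) G (𝓝 0) := tendsto_comap.mono_left inf_le_right
    have := tendsto_const_nhds (x := (1 : R)) (f := G) |>.sub h1
    simpa using this
  exact eq_of_nhds_neBot (hcl.mono hlim)

end Top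

/-- In a compact Hausdorff topological ring, the closure of the upper nilradical is
contained in the Jacobson radical (the intersection of all maximal left ideals). -/
theorem closure_upperNilradical_subset_jacobson (R : Type*) [Ring R] [TopologicalSpace R]
    [IsTopologicalRing R] [CompactSpace R] [T2Space R] :
    closure (upperNilradical R : Set R) ⊆ (Ideal.jacobson (⊥ : Ideal R) : Set R) := by
  intro x hx
  rw [SetLike.mem_coe, Ideal.jacobson, Ideal.mem_sInf]
  rintro M ⟨-, hM⟩
  by_contra hxM
  have hx' : x ∈ M ⊔ Ideal.span {x} :=
    le_sup_right (a := M) (Ideal.subset_span (Set.mem_singleton x))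
  have htop : M ⊔ Ideal.span {x} = ⊤ :=
    hM.1.2 _ (lt_of_le_of_ne le_sup_left (fun h => hxM (h.symm ▸ hx')))
  have h1 : (1 : R) ∈ M ⊔ Ideal.span {x} := htop.symm ▸ Submodule.mem_top
  obtain ⟨m, hm, z, hz, hmz⟩ := Submodule.mem_sup.mp h1
  obtain ⟨r, hr⟩ := Submodule.mem_span_singleton.mp hz
  have hyN : r * x ∈ closure (upperNilradical R : Set R) :=
    map_mem_closure (continuous_const.mul continuous_id) hx (fun a ha => unr_mul_left r ha)
  obtain ⟨s, hs⟩ := left_inv_one_sub hyN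
  have hm' : m = 1 - r * x := by
    rw [← hmz, ← hr, smul_eq_mul, add_sub_cancel_right]
  have : (1 : R) ∈ M := by
    have := M.smul_mem s hm
    rwa [smul_eq_mul, hm', hs] at this
  exact hM.1.1 ((Ideal.eq_top_iff_one M).mpr this)
end

section
/- Let S be a semisimple (Jacobson radical zero) compact Hausdorff topological ring that is nonzero. Then S is unital. -/
set_option linter.unusedSectionVars false
set_option linter.unusedVariables false
/-- An element `x` of a non-unital ring is left quasi-regular if there is `y` with
`y + x + y * x = 0`. -/
def IsLeftQuasiRegular {S : Type*} [NonUnitalRing S] (x : S) : Prop :=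
  ∃ y : S, y + x + y * x = 0

namespace CSUaux

variable {S : Type*} [NonUnitalRing S]

/-- The "circle" (quasi-multiplication) operation. -/
def circ (x y : S) : S := x + y + x * y

lemma circ_assoc (x y z : S) : circ (circ x y) z = circ x (circ y z) := by
  simp only [circ, mul_add, add_mul, mul_assoc]; abel

section Top

variable [TopologicalSpace S] [IsTopologicalRing S]

lemma circ_continuous : Continuous (fun p : S × S => circ p.1 p.2) := by
  unfold circ; fun_prop

end Top

/-- Circle powers of `a`, starting from `cpow a 0 = a`. -/
def cpow (a : S) : ℕ → S
  | 0 => a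
  | n + 1 => circ (cpow a n) a

lemma cpow_range_circ (a : S) (m n : ℕ) :
    circ (cpow a m) (cpow a n) = cpow a (m + n + 1) := by
  induction n with
  | zero => rfl
  | succ n ih =>
      show circ (cpow a m) (circ (cpow a n) a) = _
      rw [← circ_assoc, ih]; rfl

lemma lqr_swap (u v : S) (h : IsLeftQuasiRegular (u * v)) :
    IsLeftQuasiRegular (v * u) := by
  obtain ⟨y, hy⟩ := h
  refine ⟨-(v * u) - v * y * u, ?_⟩
  have key : -(v * u) - v * y * u + v * u + (-(v * u) - v * y * u) * (v * u)
      = -(v * (y + u * v + y * (u * v)) * u) := by noncomm_ring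
  rw [key, hy, mul_zero, zero_mul, neg_zero]

variable [TopologicalSpace S] [IsTopologicalRing S] [CompactSpace S] [T2Space S]

/-- The key compactness lemma: a non-left-quasi-regular element yields a nonzero
circle-idempotent in the closure of its circle powers. -/
lemma exists_circ_idem (a : S) (ha : ¬ IsLeftQuasiRegular a) :
    ∃ f : S, f ∈ closure (Set.range (cpow a)) ∧ circ f f = f ∧ f ≠ 0 := by
  set T := closure (Set.range (cpow a)) with hTdef
  have hTc : IsClosed T := isClosed_closure
  have hTcomp : IsCompact T := hTc.isCompact
  have hmul : ∀ x ∈ T, ∀ y ∈ T, circ x y ∈ T := by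
    intro x hx y hy
    refine map_mem_closure₂ circ_continuous hx hy ?_
    rintro _ ⟨m, rfl⟩ _ ⟨n, rfl⟩
    exact ⟨m + n + 1, (cpow_range_circ a m n).symm⟩
  -- build the compact Hausdorff semigroup on the subtype
  let M := {x : S // x ∈ T}
  letI : Mul M := ⟨fun p q => ⟨circ p.1 q.1, hmul _ p.2 _ q.2⟩⟩
  letI : Semigroup M := { mul_assoc := fun p q r => Subtype.ext (circ_assoc p.1 q.1 r.1) }
  haveI : CompactSpace M := isCompact_iff_compactSpace.mp hTcomp
  haveI : Nonempty M := ⟨⟨a, subset_closure ⟨0, rfl⟩⟩⟩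
  have cml : ∀ p : M, Continuous (fun q : M => q * p) := by
    intro p
    apply Continuous.subtype_mk
    exact circ_continuous.comp (continuous_subtype_val.prodMk continuous_const)
  obtain ⟨⟨f, hfT⟩, hidem⟩ := exists_idempotent_of_compact_t2_of_continuous_mul_left cml
  have hcf : circ f f = f := congrArg Subtype.val hidem
  refine ⟨f, hfT, hcf, ?_⟩
  -- if f = 0 then a would be left quasi-regular
  rintro rfl
  have hsub : T ⊆ ((fun s => circ s a) '' T) ∪ {a} := by
    apply closure_minimal
    · rintro _ ⟨n, rfl⟩
      cases n with
      | zero => exact Or.inr rfl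
      | succ n => exact Or.inl ⟨cpow a n, subset_closure ⟨n, rfl⟩, rfl⟩
    · refine IsClosed.union ?_ isClosed_singleton
      exact (hTcomp.image
        (circ_continuous.comp (continuous_id.prodMk continuous_const))).isClosed
  rcases hsub hfT with h | h
  · obtain ⟨y, _, hy⟩ := h
    exact ha ⟨y, hy⟩
  · apply ha
    refine ⟨0, ?_⟩
    have : a = 0 := h.symm
    simp [this]

end CSUaux

namespace CSUaux2
open CSUaux

variable {S : Type*} [NonUnitalRing S] [TopologicalSpace S] [IsTopologicalRing S]
  [CompactSpace S] [T2Space S]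

lemma ring_idem_of_circ {f : S} (h : circ f f = f) : (-f) * (-f) = -f := by
  have h3 : f + f + f * f = f := h
  have h' : f * f = -f := by
    calc f * f = (f + f + f * f) - f - f := by abel
      _ = f - f - f := by rw [h3]
      _ = -f := by abel
  rw [neg_mul_neg]; exact h'

/-- Enlarging an idempotent: left-annihilated case. -/
lemma grow_left (ε : S) (hεi : ε * ε = ε) (z : S) (hεz : ε * z = 0) (r : S)
    (hr : ¬ IsLeftQuasiRegular (r * z)) :
    ∃ g : S, g ≠ 0 ∧ g * g = g ∧ ε * g = 0 ∧ g * ε = 0 := by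
  have ha : ¬ IsLeftQuasiRegular (z * r) := fun h => hr (lqr_swap z r h)
  obtain ⟨f, hfT, hcf, hf0⟩ := exists_circ_idem (z * r) ha
  -- all circle powers of z*r lie in z*S
  have hpow : ∀ n, ∃ s : S, cpow (z * r) n = z * s := by
    intro n
    induction n with
    | zero => exact ⟨r, rfl⟩
    | succ n ih =>
        obtain ⟨s, hs⟩ := ih
        refine ⟨s + r + s * (z * r), ?_⟩
        show circ (cpow (z * r) n) (z * r) = _
        rw [hs]
        simp only [circ, mul_add, mul_assoc]
  have hεf : ε * f = 0 := by
    have hcl : IsClosed {x : S | ε * x = 0} :=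
      isClosed_eq (continuous_const.mul continuous_id) continuous_const
    have : closure (Set.range (cpow (z * r))) ⊆ {x : S | ε * x = 0} := by
      apply closure_minimal _ hcl
      rintro _ ⟨n, rfl⟩
      obtain ⟨s, hs⟩ := hpow n
      show ε * cpow (z * r) n = 0
      rw [hs, ← mul_assoc, hεz, zero_mul]
    exact this hfT
  set e := -f with he_def
  have he : e * e = e := ring_idem_of_circ hcf
  have he0 : e ≠ 0 := neg_ne_zero.mpr hf0
  have hεe : ε * e = 0 := by rw [he_def, mul_neg, hεf, neg_zero]
  refine ⟨e - e * ε, ?_, ?_, ?_, ?_⟩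
  · intro h
    have heε : e = e * ε := by rwa [sub_eq_zero] at h
    apply he0
    calc e = e * e := he.symm
      _ = (e * ε) * e := by rw [← heε]
      _ = e * (ε * e) := mul_assoc _ _ _
      _ = 0 := by rw [hεe, mul_zero]
  · have expand : (e - e * ε) * (e - e * ε)
        = e * e - (e * e) * ε - e * (ε * e) + (e * (ε * e)) * ε := by noncomm_ring
    rw [expand, he, hεe, mul_zero, zero_mul]
    abel
  · rw [mul_sub, hεe, ← mul_assoc, hεe, zero_mul, sub_zero]
  · rw [sub_mul, mul_assoc, hεi, sub_self]

/-- Enlarging an idempotent: right-annihilated case. -/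
lemma grow_right (ε : S) (hεi : ε * ε = ε) (z : S) (hzε : z * ε = 0) (r : S)
    (hr : ¬ IsLeftQuasiRegular (r * z)) :
    ∃ g : S, g ≠ 0 ∧ g * g = g ∧ ε * g = 0 ∧ g * ε = 0 := by
  obtain ⟨f, hfT, hcf, hf0⟩ := exists_circ_idem (r * z) hr
  have hpow : ∀ n, ∃ s : S, cpow (r * z) n = s * z := by
    intro n
    induction n with
    | zero => exact ⟨r, rfl⟩
    | succ n ih =>
        obtain ⟨s, hs⟩ := ih
        refine ⟨s + r + (s * z) * r, ?_⟩
        show circ (cpow (r * z) n) (r * z) = _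
        rw [hs]
        simp only [circ, add_mul, mul_assoc]
  have hfε : f * ε = 0 := by
    have hcl : IsClosed {x : S | x * ε = 0} :=
      isClosed_eq (continuous_id.mul continuous_const) continuous_const
    have : closure (Set.range (cpow (r * z))) ⊆ {x : S | x * ε = 0} := by
      apply closure_minimal _ hcl
      rintro _ ⟨n, rfl⟩
      obtain ⟨s, hs⟩ := hpow n
      show cpow (r * z) n * ε = 0
      rw [hs, mul_assoc, hzε, mul_zero]
    exact this hfT
  set e := -f with he_def
  have he : e * e = e := ring_idem_of_circ hcf
  have he0 : e ≠ 0 := neg_ne_zero.mpr hf0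
  have heε : e * ε = 0 := by rw [he_def, neg_mul, hfε, neg_zero]
  refine ⟨e - ε * e, ?_, ?_, ?_, ?_⟩
  · intro h
    have hεe : e = ε * e := by rwa [sub_eq_zero] at h
    apply he0
    calc e = e * e := he.symm
      _ = e * (ε * e) := by rw [← hεe]
      _ = (e * ε) * e := (mul_assoc _ _ _).symm
      _ = 0 := by rw [heε, zero_mul]
  · have expand : (e - ε * e) * (e - ε * e)
        = e * e - (e * ε) * e - ε * (e * e) + ε * ((e * ε) * e) := by noncomm_ring
    rw [expand, he, heε, zero_mul, mul_zero]
    abel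
  · rw [mul_sub, ← mul_assoc, hεi, sub_self]
  · rw [sub_mul, heε, mul_assoc, heε, mul_zero, sub_zero]

end CSUaux2

/-- A nonzero compact Hausdorff topological ring with zero Jacobson radical
(no nonzero element `x` with `r * x` left quasi-regular for all `r`) is unital. -/
theorem compact_semisimple_is_unital (S : Type*) [NonUnitalRing S] [TopologicalSpace S]
    [IsTopologicalRing S] [CompactSpace S] [T2Space S]
    (hss : ∀ x : S, (∀ r : S, IsLeftQuasiRegular (r * x)) → x = 0)
    (hne : ∃ x : S, x ≠ 0) :
    ∃ one : S, ∀ x : S, one * x = x ∧ x * one = x := by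
  classical
  let E := {e : S // e * e = e}
  let r : E → E → Prop := fun i j => i.1 * j.1 = i.1 ∧ j.1 * i.1 = i.1
  have rtrans : ∀ {i j k : E}, r i j → r j k → r i k := by
    rintro ⟨i, hi⟩ ⟨j, hj⟩ ⟨k, hk⟩ ⟨hij, hji⟩ ⟨hjk, hkj⟩
    constructor
    · show i * k = i
      calc i * k = (i * j) * k := by rw [hij]
        _ = i * (j * k) := mul_assoc _ _ _
        _ = i * j := by rw [hjk]
        _ = i := hij
    · show k * i = i
      calc k * i = k * (j * i) := by rw [hji]
        _ = (k * j) * i := (mul_assoc _ _ _).symm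
        _ = j * i := by rw [hkj]
        _ = i := hji
  have hrefl : ∀ i : E, r i i := fun i => ⟨i.2, i.2⟩
  have hchains : ∀ c : Set E, IsChain r c → ∃ ub, ∀ a ∈ c, r a ub := by
    intro c hc
    rcases c.eq_empty_or_nonempty with rfl | hcne
    · exact ⟨⟨0, by rw [mul_zero]⟩, by simp⟩
    · haveI : Nonempty c := hcne.to_subtype
      set Z : c → Set S := fun i => closure (Subtype.val '' {j : E | j ∈ c ∧ r i.1 j}) with hZ
      have hZne : ∀ i, (Z i).Nonempty := fun i =>
        ⟨i.1.1, subset_closure ⟨i.1, ⟨i.2, hrefl i.1⟩, rfl⟩⟩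
      have hZcl : ∀ i, IsClosed (Z i) := fun _ => isClosed_closure
      have hZcomp : ∀ i, IsCompact (Z i) := fun i => (hZcl i).isCompact
      have hZdir : Directed (· ⊇ ·) Z := by
        intro i j
        rcases eq_or_ne i.1 j.1 with h | h
        · exact ⟨i, subset_rfl, by rw [hZ]; exact closure_mono (Set.image_mono
            (fun k hk => ⟨hk.1, by rw [← h]; exact hk.2⟩))⟩
        · rcases hc i.2 j.2 h with hij | hji
          · exact ⟨j, closure_mono (Set.image_mono
              (fun k hk => ⟨hk.1, rtrans hij hk.2⟩)), subset_rfl⟩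
          · exact ⟨i, subset_rfl, closure_mono (Set.image_mono
              (fun k hk => ⟨hk.1, rtrans hji hk.2⟩))⟩
      obtain ⟨x, hx⟩ := IsCompact.nonempty_iInter_of_directed_nonempty_isCompact_isClosed
        Z hZdir hZne hZcomp hZcl
      obtain ⟨i0⟩ := ‹Nonempty c›
      have hxI : x * x = x := by
        have hs : Z i0 ⊆ {s : S | s * s = s} := closure_minimal
          (by rintro _ ⟨j, _, rfl⟩; exact j.2)
          (isClosed_eq (continuous_id.mul continuous_id) continuous_id)
        exact hs (Set.mem_iInter.mp hx i0)
      refine ⟨⟨x, hxI⟩, ?_⟩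
      intro a hac
      have hsub : Z ⟨a, hac⟩ ⊆ {s : S | a.1 * s = a.1 ∧ s * a.1 = a.1} := by
        apply closure_minimal
        · rintro _ ⟨j, ⟨_, hrj⟩, rfl⟩; exact ⟨hrj.1, hrj.2⟩
        · exact (isClosed_eq (continuous_const.mul continuous_id) continuous_const).inter
            (isClosed_eq (continuous_id.mul continuous_const) continuous_const)
      exact hsub (Set.mem_iInter.mp hx ⟨a, hac⟩)
  obtain ⟨m, hm⟩ := exists_maximal_of_chains_bounded hchains (fun hab hbc => rtrans hab hbc)
  set ε := m.1 with hεdef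
  have hεi : ε * ε = ε := m.2
  have noGrow : ∀ g : S, g * g = g → ε * g = 0 → g * ε = 0 → g = 0 := by
    intro g hg hεg hgε
    have hidem : (ε + g) * (ε + g) = ε + g := by
      rw [add_mul, mul_add, mul_add, hεi, hg, hεg, hgε]; abel
    have h1 : r m ⟨ε + g, hidem⟩ :=
      ⟨by show ε * (ε + g) = ε; rw [mul_add, hεi, hεg, add_zero],
       by show (ε + g) * ε = ε; rw [add_mul, hεi, hgε, add_zero]⟩
    have h2 := hm _ h1
    have h3 : ε + g = ε := by
      have := h2.1
      show ε + g = ε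
      calc ε + g = (ε + g) * ε := this.symm
        _ = ε := by rw [add_mul, hεi, hgε, add_zero]
    exact add_eq_left.mp h3
  have hleft : ∀ x : S, ε * x = x := by
    intro x
    by_contra hne'
    have hz : x - ε * x ≠ 0 := sub_ne_zero.mpr (fun h => hne' h.symm)
    have hεz : ε * (x - ε * x) = 0 := by
      rw [mul_sub, ← mul_assoc, hεi, sub_self]
    obtain ⟨rr, hrr⟩ : ∃ rr : S, ¬ IsLeftQuasiRegular (rr * (x - ε * x)) := by
      by_contra hall; push_neg at hall; exact hz (hss _ hall)
    obtain ⟨g, hg0, hgg, hεg, hgε⟩ := CSUaux2.grow_left ε hεi _ hεz rr hrr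
    exact hg0 (noGrow g hgg hεg hgε)
  have hright : ∀ x : S, x * ε = x := by
    intro x
    by_contra hne'
    have hz : x - x * ε ≠ 0 := sub_ne_zero.mpr (fun h => hne' h.symm)
    have hzε : (x - x * ε) * ε = 0 := by
      rw [sub_mul, mul_assoc, hεi, sub_self]
    obtain ⟨rr, hrr⟩ : ∃ rr : S, ¬ IsLeftQuasiRegular (rr * (x - x * ε)) := by
      by_contra hall; push_neg at hall; exact hz (hss _ hall)
    obtain ⟨g, hg0, hgg, hεg, hgε⟩ := CSUaux2.grow_right ε hεi _ hzε rr hrr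
    exact hg0 (noGrow g hgg hεg hgε)
  exact ⟨ε, fun x => ⟨hleft x, hright x⟩⟩
end

section
/- In a compact Hausdorff topological ring, the Jacobson radical is topologically nilpotent: the powers J(R)^n converge to zero, i.e., for every neighborhood U of 0 there is n with J(R)^n ⊆ U. -/
open Filter Set Topology

section Aux

variable {R : Type*} [Ring R] [TopologicalSpace R] [IsTopologicalRing R] [CompactSpace R] [T2Space R]

lemma aux_isClosed_isUnit : IsClosed {x : R | IsUnit x} := by
  have h : {x : R | IsUnit x} = Prod.fst '' {p : R × R | p.1 * p.2 = 1 ∧ p.2 * p.1 = 1} := by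
    ext x
    simp only [Set.mem_setOf_eq, Set.mem_image, Prod.exists]
    constructor
    · intro hx
      rcases isUnit_iff_exists.mp hx with ⟨b, hb1, hb2⟩
      exact ⟨x, b, ⟨hb1, hb2⟩, rfl⟩
    · rintro ⟨a, b, ⟨h1, h2⟩, rfl⟩
      exact isUnit_iff_exists.mpr ⟨b, h1, h2⟩
  rw [h]
  have hc : IsClosed {p : R × R | p.1 * p.2 = 1 ∧ p.2 * p.1 = 1} :=
    (isClosed_eq (continuous_fst.mul continuous_snd) continuous_const).inter
      (isClosed_eq (continuous_snd.mul continuous_fst) continuous_const)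
  exact (hc.isCompact.image continuous_fst).isClosed

lemma aux_jac_unit {x : R} (hx : x ∈ Ideal.jacobson (⊥ : Ideal R)) (y : R) :
    IsUnit (y * x + 1) := by
  have h := Ideal.mem_jacobson_iff.mp hx
  obtain ⟨z, hz⟩ := h y
  rw [Ideal.mem_bot, sub_eq_zero] at hz
  have hz1 : z * (y * x + 1) = 1 := by
    rw [mul_add, mul_one, ← mul_assoc]; exact hz
  obtain ⟨w, hw⟩ := h (-(z * y))
  rw [Ideal.mem_bot, sub_eq_zero] at hw
  have hzeq : -(z * y) * x + 1 = z := by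
    rw [neg_mul, neg_add_eq_sub, sub_eq_iff_eq_add, add_comm]
    exact hz.symm
  have hw1 : w * z = 1 := by
    have : w * (-(z * y) * x + 1) = 1 := by
      rw [mul_add, mul_one, ← mul_assoc]; exact hw
    rwa [hzeq] at this
  have hwu : w = y * x + 1 := by
    calc w = w * (z * (y * x + 1)) := by rw [hz1, mul_one]
    _ = (w * z) * (y * x + 1) := by rw [mul_assoc]
    _ = y * x + 1 := by rw [hw1, one_mul]
  exact isUnit_iff_exists.mpr ⟨z, by rw [← hwu]; exact hw1, hz1⟩

lemma aux_one_sub_unit {x : R} (hx : x ∈ Ideal.jacobson (⊥ : Ideal R)) : IsUnit (1 - x) := by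
  have := aux_jac_unit hx (-1)
  rwa [neg_one_mul, neg_add_eq_sub] at this

lemma aux_idem_zero {e : R} (he : e ∈ closure (Ideal.jacobson (⊥ : Ideal R) : Set R))
    (h2 : e * e = e) : e = 0 := by
  have hcont : Continuous fun x : R => 1 - x := continuous_const.sub continuous_id
  have h1 : (1 : R) - e ∈ closure ((fun x : R => 1 - x) '' (Ideal.jacobson (⊥ : Ideal R) : Set R)) :=
    image_closure_subset_closure_image hcont ⟨e, he, rfl⟩
  have h3 : IsUnit (1 - e) := by
    have hsub : ((fun x : R => 1 - x) '' (Ideal.jacobson (⊥ : Ideal R) : Set R)) ⊆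
        {x : R | IsUnit x} := by
      rintro _ ⟨y, hy, rfl⟩; exact aux_one_sub_unit hy
    have := closure_mono hsub h1
    rwa [aux_isClosed_isUnit.closure_eq] at this
  obtain ⟨b, hb1, _⟩ := isUnit_iff_exists.mp h3
  calc e = e * ((1 - e) * b) := by rw [hb1, mul_one]
  _ = (e * (1 - e)) * b := by rw [mul_assoc]
  _ = 0 := by rw [mul_sub, mul_one, h2, sub_self, zero_mul]

lemma aux_semigroup_nil {S : Set R} (hSc : IsClosed S) (hS0 : (0 : R) ∈ S)
    (hSmul : ∀ x ∈ S, ∀ y ∈ S, x * y ∈ S)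
    (hidem : ∀ e ∈ S, e * e = e → e = 0) :
    ∀ U ∈ nhds (0 : R), ∃ n : ℕ,
      ∀ l : List R, l.length = n + 1 → (∀ x ∈ l, x ∈ S) → l.prod ∈ U := by
  classical
  haveI : Nonempty R := ⟨0⟩
  let P : ℕ → Set R := fun n =>
    {x | ∃ l : List R, l.length = n + 1 ∧ (∀ a ∈ l, a ∈ S) ∧ l.prod = x}
  have prodmem : ∀ l : List R, l ≠ [] → (∀ a ∈ l, a ∈ S) → l.prod ∈ S := by
    intro l
    induction l with
    | nil => intro h; exact absurd rfl h
    | cons a t ih =>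
      intro _ hm
      cases t with
      | nil => simpa using hm a (by simp)
      | cons b u =>
        rw [List.prod_cons]
        exact hSmul a (hm a (by simp)) _ (ih (by simp) fun c hc => hm c (List.mem_cons_of_mem a hc))
  have hP0 : ∀ n, (0 : R) ∈ P n := by
    intro n
    refine ⟨List.replicate (n + 1) 0, by simp, ?_, ?_⟩
    · intro a ha; rw [List.eq_of_mem_replicate ha]; exact hS0
    · rw [List.prod_replicate]; exact zero_pow (Nat.succ_ne_zero n)
  have hPS : ∀ n, P n ⊆ S := by
    rintro n x ⟨l, hl, hm, hp⟩
    exact hp ▸ prodmem l (by intro h; rw [h] at hl; simp at hl) hm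
  have hPmono : ∀ n, P (n + 1) ⊆ P n := by
    rintro n x ⟨l, hl, hm, hp⟩
    match l, hl with
    | a :: b :: t, hl =>
      refine ⟨(a * b) :: t, ?_, ?_, ?_⟩
      · simpa using by simpa using hl
      · intro c hc
        rcases List.mem_cons.mp hc with h | h
        · rw [h]; exact hSmul a (hm a (by simp)) b (hm b (by simp))
        · exact hm c (by simp [h])
      · rw [← hp]; simp [List.prod_cons, mul_assoc]
  have hPcons : ∀ n, ∀ a ∈ S, ∀ x ∈ P n, a * x ∈ P (n + 1) := by
    rintro n a ha x ⟨l, hl, hm, hp⟩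
    refine ⟨a :: l, by simp [hl], ?_, by rw [List.prod_cons, hp]⟩
    intro c hc
    rcases List.mem_cons.mp hc with h | h
    · rw [h]; exact ha
    · exact hm c h
  have hPsplit : ∀ n, ∀ x ∈ P (n + n + 1), ∃ a ∈ P n, ∃ b ∈ P n, a * b = x := by
    rintro n x ⟨l, hl, hm, hp⟩
    refine ⟨(l.take (n + 1)).prod, ⟨l.take (n + 1), ?_, ?_, rfl⟩,
      (l.drop (n + 1)).prod, ⟨l.drop (n + 1), ?_, ?_, rfl⟩, ?_⟩
    · rw [List.length_take, hl]; omega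
    · intro a ha; exact hm a (List.take_subset _ _ ha)
    · rw [List.length_drop, hl]; omega
    · intro a ha; exact hm a (List.drop_subset _ _ ha)
    · rw [List.prod_take_mul_prod_drop, hp]
  let k : ℕ → Set R := fun n => closure (P n)
  have hkc : ∀ n, IsClosed (k n) := fun _ => isClosed_closure
  have hkcomp : ∀ n, IsCompact (k n) := fun n => (hkc n).isCompact
  have hkmono : ∀ n, k (n + 1) ⊆ k n := fun n => closure_mono (hPmono n)
  set K : Set R := ⋂ n, k n with hKdef
  have hKc : IsClosed K := isClosed_iInter fun n => hkc n
  have hK0 : (0 : R) ∈ K := mem_iInter.mpr fun n => subset_closure (hP0 n)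
  have hKS : K ⊆ S := by
    intro x hx
    have h1 : x ∈ k 0 := mem_iInter.mp hx 0
    have h2 := closure_mono (hPS 0) h1
    rwa [hSc.closure_eq] at h2
  have hKmul : ∀ x ∈ K, ∀ y ∈ K, x * y ∈ K := by
    intro x hx y hy
    rw [hKdef, mem_iInter]
    intro n
    have h1 : x * y ∈ k (n + 1) :=
      map_mem_closure₂ continuous_mul (mem_iInter.mp hx 0) (mem_iInter.mp hy n)
        (fun a ha b hb => hPcons n a (hPS 0 ha) b hb)
    exact hkmono n h1
  have hKsplit : ∀ x ∈ K, ∃ a ∈ K, ∃ b ∈ K, a * b = x := by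
    intro x hx
    set F : ℕ → Set (R × R) := fun n => (k n ×ˢ k n) ∩ {p : R × R | p.1 * p.2 = x} with hF
    have hFc : ∀ n, IsClosed (F n) := fun n =>
      ((hkc n).prod (hkc n)).inter
        (isClosed_eq (continuous_fst.mul continuous_snd) continuous_const)
    have hFne : ∀ n, (F n).Nonempty := by
      intro n
      have hx2 : x ∈ k (n + n + 1) := mem_iInter.mp hx _
      have himg : IsCompact ((fun p : R × R => p.1 * p.2) '' (k n ×ˢ k n)) :=
        ((hkcomp n).prod (hkcomp n)).image continuous_mul
      have hsub : P (n + n + 1) ⊆ (fun p : R × R => p.1 * p.2) '' (k n ×ˢ k n) := by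
        intro y hy
        obtain ⟨a, ha, b, hb, hab⟩ := hPsplit n y hy
        exact ⟨(a, b), ⟨subset_closure ha, subset_closure hb⟩, hab⟩
      have hmem := closure_minimal hsub himg.isClosed hx2
      obtain ⟨⟨a, b⟩, hab1, hab2⟩ := hmem
      exact ⟨(a, b), ⟨hab1, hab2⟩⟩
    have hFd : ∀ n, F (n + 1) ⊆ F n := fun n =>
      inter_subset_inter (Set.prod_mono (hkmono n) (hkmono n)) subset_rfl
    obtain ⟨⟨a, b⟩, hab⟩ :=
      IsCompact.nonempty_iInter_of_sequence_nonempty_isCompact_isClosed F hFd hFne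
        ((hFc 0).isCompact) hFc
    rw [mem_iInter] at hab
    exact ⟨a, mem_iInter.mpr fun n => (hab n).1.1, b, mem_iInter.mpr fun n => (hab n).1.2,
      (hab 0).2⟩
  have hKzero : ∀ x ∈ K, x = 0 := by
    intro x hx
    have hgex : ∀ y : R, ∃ p : R × R, y ∈ K → p.1 ∈ K ∧ p.2 ∈ K ∧ p.1 * p.2 = y := by
      intro y
      by_cases hy : y ∈ K
      · obtain ⟨a, ha, b, hb, hab⟩ := hKsplit y hy
        exact ⟨(a, b), fun _ => ⟨ha, hb, hab⟩⟩
      · exact ⟨(0, 0), fun h => absurd h hy⟩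
    choose g hg using hgex
    set A : ℕ → R := fun n => Nat.rec x (fun _ a => (g a).1) n with hAdef
    set B : ℕ → R := fun n => (g (A n)).2 with hBdef
    have hAK : ∀ n, A n ∈ K := by
      intro n
      induction n with
      | zero => exact hx
      | succ n ih => exact (hg (A n) ih).1
    have hBK : ∀ n, B n ∈ K := fun n => (hg (A n) (hAK n)).2.1
    have hABc : ∀ n, A (n + 1) * B n = A n := fun n => (hg (A n) (hAK n)).2.2
    set c : ℕ → R := fun n => Nat.rec (B 0) (fun m cm => B (m + 1) * cm) n with hcdef
    have hcs : ∀ n, c (n + 1) = B (n + 1) * c n := fun _ => rfl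
    have hcK : ∀ n, c n ∈ K := by
      intro n
      induction n with
      | zero => exact hBK 0
      | succ n ih => exact hKmul _ (hBK (n + 1)) _ ih
    have hxc : ∀ n, A (n + 1) * c n = x := by
      intro n
      induction n with
      | zero => exact hABc 0
      | succ n ih => rw [hcs n, ← mul_assoc, hABc (n + 1), ih]
    have hDex : ∀ m n : ℕ, ∃ z : R, z ∈ K ∧ (m < n → c n = z * c m) := by
      intro m n
      rcases lt_or_ge m n with h | h
      · have key : ∀ n', m + 1 ≤ n' → ∃ z ∈ K, c n' = z * c m := by
          intro n' hn'
          induction n', hn' using Nat.le_induction with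
          | base => exact ⟨B (m + 1), hBK (m + 1), hcs m⟩
          | succ n' hn' ih =>
            obtain ⟨z, hz, hcz⟩ := ih
            exact ⟨B (n' + 1) * z, hKmul (B (n' + 1)) (hBK (n' + 1)) z hz, by rw [hcs n', hcz, mul_assoc]⟩
        obtain ⟨z, hz, h'⟩ := key n h
        exact ⟨z, hz, fun _ => h'⟩
      · exact ⟨0, hK0, fun hlt => absurd hlt (not_lt.mpr h)⟩
    choose D hDK hDc using hDex
    set 𝒰 : Ultrafilter ℕ := Filter.hyperfilter ℕ with h𝒰
    set L : (ℕ → R) → R := fun f => (𝒰.map f).lim with hLdef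
    have hLt : ∀ f : ℕ → R, Filter.Tendsto f ↑𝒰 (nhds (L f)) := by
      intro f
      have := (𝒰.map f).le_nhds_lim
      rwa [Ultrafilter.coe_map] at this
    have hLK : ∀ f : ℕ → R, (∀ n, f n ∈ K) → L f ∈ K := fun f h =>
      hKc.mem_of_tendsto (hLt f) (Filter.Eventually.of_forall h)
    have hgt : ∀ m : ℕ, ∀ᶠ n in (↑𝒰 : Filter ℕ), m < n := fun m =>
      (Filter.eventually_gt_atTop m).filter_mono Nat.hyperfilter_le_atTop
    set cs : R := L c with hcsdef
    set as : R := L (fun n => A (n + 1)) with hasdef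
    have hxac : x = as * cs := by
      have h1 : Filter.Tendsto (fun n => A (n + 1) * c n) ↑𝒰 (nhds (as * cs)) :=
        (hLt _).mul (hLt c)
      have h2 : (fun n => A (n + 1) * c n) = fun _ => x := funext hxc
      rw [h2] at h1
      exact tendsto_nhds_unique tendsto_const_nhds h1
    set e : ℕ → R := fun m => L (fun n => D m n) with hedef
    have heK : ∀ m, e m ∈ K := fun m => hLK _ fun n => hDK m n
    have hce : ∀ m, cs = e m * c m := by
      intro m
      have h1 : Filter.Tendsto (fun n => D m n * c m) ↑𝒰 (nhds (e m * c m)) :=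
        (hLt _).mul tendsto_const_nhds
      have h2 : Filter.Tendsto c ↑𝒰 (nhds (e m * c m)) :=
        h1.congr' ((hgt m).mono fun n hn => (hDc m n hn).symm)
      exact tendsto_nhds_unique (hLt c) h2
    set eb : R := L e with hebdef
    have hebK : eb ∈ K := hLK e heK
    have hebc : eb * cs = cs := by
      have h1 : Filter.Tendsto (fun m => e m * c m) ↑𝒰 (nhds (eb * cs)) :=
        (hLt e).mul (hLt c)
      have h2 : (fun m => e m * c m) = fun _ => cs := funext fun m => (hce m).symm
      rw [h2] at h1
      exact tendsto_nhds_unique h1 tendsto_const_nhds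
    have hpowK : ∀ j : ℕ, eb ^ (j + 1) ∈ K := by
      intro j
      induction j with
      | zero => simpa using hebK
      | succ j ih => rw [pow_succ]; exact hKmul _ ih _ hebK
    have hpowc : ∀ j : ℕ, eb ^ (j + 1) * cs = cs := by
      intro j
      induction j with
      | zero => simpa using hebc
      | succ j ih => rw [pow_succ, mul_assoc, hebc]; exact ih
    set Γ : Set R := closure {z : R | ∃ j : ℕ, eb ^ (j + 1) = z} with hΓdef
    have hΓK : Γ ⊆ K := closure_minimal (by rintro z ⟨j, rfl⟩; exact hpowK j) hKc
    obtain ⟨f, hfΓ, hff⟩ :=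
      exists_idempotent_in_compact_subsemigroup (fun r : R => continuous_mul_right r) Γ
        ⟨eb, subset_closure ⟨0, pow_one eb⟩⟩ isClosed_closure.isCompact
        (by
          intro p hp q hq
          refine map_mem_closure₂ continuous_mul hp hq ?_
          rintro a ⟨i, rfl⟩ b ⟨j, rfl⟩
          exact ⟨i + j + 1, by rw [← pow_add]; congr 1; omega⟩)
    have hf0 : f = 0 := hidem f (hKS (hΓK hfΓ)) hff
    have hfc : f * cs = cs := by
      have hZ : IsClosed {z : R | z * cs = cs} :=
        isClosed_eq (continuous_mul_right cs) continuous_const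
      have hsub : Γ ⊆ {z : R | z * cs = cs} :=
        closure_minimal (by rintro z ⟨j, rfl⟩; exact hpowc j) hZ
      exact hsub hfΓ
    have hcs0 : cs = 0 := by rw [← hfc, hf0, zero_mul]
    rw [hxac, hcs0, mul_zero]
  intro U hU
  by_contra hcon
  push_neg at hcon
  have h0U : (0 : R) ∈ interior U := mem_interior_iff_mem_nhds.mpr hU
  set C : ℕ → Set R := fun n => k n ∩ (interior U)ᶜ with hCdef
  have hCc : ∀ n, IsClosed (C n) := fun n => (hkc n).inter isOpen_interior.isClosed_compl
  have hCne : ∀ n, (C n).Nonempty := by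
    intro n
    obtain ⟨l, hl, hm, hp⟩ := hcon n
    exact ⟨l.prod, subset_closure ⟨l, hl, hm, rfl⟩, fun h => hp (interior_subset h)⟩
  have hCd : ∀ n, C (n + 1) ⊆ C n := fun n => inter_subset_inter (hkmono n) subset_rfl
  obtain ⟨y, hy⟩ :=
    IsCompact.nonempty_iInter_of_sequence_nonempty_isCompact_isClosed C hCd hCne
      ((hCc 0).isCompact) hCc
  rw [mem_iInter] at hy
  have hyK : y ∈ K := mem_iInter.mpr fun n => (hy n).1
  have : y = 0 := hKzero y hyK
  exact (hy 0).2 (this ▸ h0U)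

end Aux

/-- In a compact Hausdorff topological ring the Jacobson radical is topologically
nilpotent: for every neighborhood `U` of `0` there is `n ≥ 1` such that every product of
`n` elements of the Jacobson radical lies in `U`. -/
theorem jacobson_topologically_nilpotent (R : Type*) [Ring R] [TopologicalSpace R]
    [IsTopologicalRing R] [CompactSpace R] [T2Space R] :
    ∀ U ∈ nhds (0 : R), ∃ n : ℕ, 1 ≤ n ∧
      ∀ l : List R, l.length = n → (∀ x ∈ l, x ∈ Ideal.jacobson (⊥ : Ideal R)) →
        l.prod ∈ U := by
  intro U hU
  set J : Ideal R := Ideal.jacobson (⊥ : Ideal R) with hJ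
  have hSmul : ∀ x ∈ closure (J : Set R), ∀ y ∈ closure (J : Set R),
      x * y ∈ closure (J : Set R) := by
    intro x hx y hy
    exact map_mem_closure₂ continuous_mul hx hy
      (fun a ha b hb => Ideal.mul_mem_left J a hb)
  obtain ⟨n, hn⟩ := aux_semigroup_nil (S := closure (J : Set R)) isClosed_closure
    (subset_closure J.zero_mem) hSmul (fun e he h2 => aux_idem_zero he h2) U hU
  exact ⟨n + 1, Nat.succ_le_succ (Nat.zero_le n),
    fun l hl hm => hn l hl fun x hx => subset_closure (hm x hx)⟩
end
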